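/- If a series ∑ aₙ of real numbers is conditionally convergent, then there exists a permutation τ of the positive integers such that the partial sums of ∑ a_{τ(n)} diverge to +∞. -/

import Mathlib

def SeriesConvTo (a : ℕ → ℝ) (s : ℝ) : Prop :=
  Filter.Tendsto (fun n => ∑ i ∈ Finset.range n, a i) Filter.atTop (nhds s)

open Filter Finset

/-- Iterate a step function starting at 0. -/
noncomputable def rstSeqRec (F : ℕ → ℕ → ℕ) : ℕ → ℕ
  | 0 => 0
  | k + 1 => F k (rstSeqRec F k)

/-- A conditionally convergent series has a rearrangement whose partial sums
diverge to +∞. -/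
theorem rst2_extended (a : ℕ → ℝ)
    (hconv : ∃ s, SeriesConvTo a s)
    (hdiv : Filter.Tendsto (fun n => ∑ i ∈ Finset.range n, |a i|) Filter.atTop Filter.atTop) :
    ∃ τ : Equiv.Perm ℕ,
      Filter.Tendsto (fun n => ∑ i ∈ Finset.range n, a (τ i)) Filter.atTop Filter.atTop := by
  classical
  obtain ⟨s, hs⟩ := hconv
  unfold SeriesConvTo at hs
  set P : ℕ → Prop := fun i => 0 ≤ a i with hPdef
  set N : ℕ → Prop := fun i => a i < 0 with hNdef
  -- positive part partial sums tend to +∞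
  have hposdef : ∀ n, ∑ i ∈ Finset.range n, max (a i) 0
      = (∑ i ∈ Finset.range n, |a i| + ∑ i ∈ Finset.range n, a i) / 2 := by
    intro n
    rw [← Finset.sum_add_distrib, Finset.sum_div]
    refine Finset.sum_congr rfl fun i _ => ?_
    rcases le_or_gt 0 (a i) with h | h
    · rw [abs_of_nonneg h, max_eq_left h]; ring
    · rw [abs_of_neg h, max_eq_right h.le]; ring
  have hnegdef : ∀ n, ∑ i ∈ Finset.range n, max (-a i) 0
      = (∑ i ∈ Finset.range n, |a i| + ∑ i ∈ Finset.range n, (-a i)) / 2 := by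
    intro n
    rw [← Finset.sum_add_distrib, Finset.sum_div]
    refine Finset.sum_congr rfl fun i _ => ?_
    rcases le_or_gt 0 (a i) with h | h
    · rw [abs_of_nonneg h, max_eq_right (by linarith)]; ring
    · rw [abs_of_neg h, max_eq_left (by linarith)]; ring
  have hpos : Tendsto (fun n => ∑ i ∈ Finset.range n, max (a i) 0) atTop atTop := by
    have h2 : Tendsto (fun n => (∑ i ∈ Finset.range n, |a i| + ∑ i ∈ Finset.range n, a i) / 2)
        atTop atTop := (hdiv.atTop_add hs).atTop_div_const (by norm_num)
    simpa only [hposdef] using h2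
  have hneg : Tendsto (fun n => ∑ i ∈ Finset.range n, max (-a i) 0) atTop atTop := by
    have hs' : Tendsto (fun n => ∑ i ∈ Finset.range n, (-a i)) atTop (nhds (-s)) := by
      simpa [Finset.sum_neg_distrib] using hs.neg
    have h2 : Tendsto (fun n => (∑ i ∈ Finset.range n, |a i| + ∑ i ∈ Finset.range n, (-a i)) / 2)
        atTop atTop := (hdiv.atTop_add hs').atTop_div_const (by norm_num)
    simpa only [hnegdef] using h2
  -- P and N are infinite
  have hinf_aux : ∀ (f : ℕ → ℝ), (∀ i, 0 ≤ f i) →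
      Tendsto (fun n => ∑ i ∈ Finset.range n, f i) atTop atTop →
      {i | f i ≠ 0}.Infinite := by
    intro f hf0 hft
    by_contra hfin
    rw [Set.not_infinite] at hfin
    obtain ⟨m, hm⟩ := hfin.bddAbove
    have hconst : ∀ n, m + 1 ≤ n →
        ∑ i ∈ Finset.range n, f i = ∑ i ∈ Finset.range (m+1), f i := by
      intro n hn
      refine (Finset.sum_subset (Finset.range_subset_range.2 hn) ?_).symm
      intro i _ hi
      simp only [Finset.mem_range, not_lt] at hi
      by_contra hne
      exact absurd (hm (show i ∈ {i | f i ≠ 0} from hne)) (by omega)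
    obtain ⟨n, hn1, hn2⟩ :=
      ((hft.eventually_ge_atTop (∑ i ∈ Finset.range (m+1), f i + 1)).and
        (eventually_ge_atTop (m+1))).exists
    rw [hconst n hn2] at hn1
    linarith
  have hPinf : (setOf P).Infinite := by
    have := hinf_aux (fun i => max (a i) 0) (fun i => le_max_right _ _) hpos
    refine this.mono ?_
    intro i hi
    simp only [Set.mem_setOf_eq] at hi ⊢
    rcases le_or_gt 0 (a i) with h | h
    · exact h
    · exact absurd (max_eq_right h.le) hi
  have hNinf : (setOf N).Infinite := by
    have := hinf_aux (fun i => max (-a i) 0) (fun i => le_max_right _ _) hneg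
    refine this.mono ?_
    intro i hi
    simp only [Set.mem_setOf_eq] at hi ⊢
    rcases lt_or_ge (a i) 0 with h | h
    · exact h
    · exact absurd (max_eq_right (by linarith)) hi
  -- partial sums of the positive subseries
  set Sp : ℕ → ℝ := fun j => ∑ k ∈ Finset.range j, a (Nat.nth P k) with hSpdef
  have hSpmono : Monotone Sp := by
    intro i j hij
    refine Finset.sum_le_sum_of_subset_of_nonneg (Finset.range_subset_range.2 hij) ?_
    intro k _ _
    exact Nat.nth_mem_of_infinite hPinf k
  have hreindex : ∀ n, Sp (Nat.count P n) = ∑ i ∈ Finset.range n, max (a i) 0 := by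
    intro n
    induction n with
    | zero => simp [hSpdef]
    | succ n ih =>
      rw [Finset.sum_range_succ, Nat.count_succ]
      by_cases h : P n
      · rw [if_pos h]
        have hstep : Sp (Nat.count P n + 1) = Sp (Nat.count P n) + a n := by
          simp only [hSpdef]
          rw [Finset.sum_range_succ, Nat.nth_count h]
        rw [hstep, ih, max_eq_left (show 0 ≤ a n from h)]
      · rw [if_neg h, add_zero, ih, max_eq_right (le_of_lt (not_le.mp h)), add_zero]
  have hSp : Tendsto Sp atTop atTop := by
    refine tendsto_atTop_of_monotone_of_subseq hSpmono (φ := Nat.count P) (l := atTop) ?_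
    have heq : (Sp ∘ Nat.count P) = fun n => ∑ i ∈ Finset.range n, max (a i) 0 :=
      funext fun n => hreindex n
    rw [heq]
    exact hpos
  -- choose block lengths
  set T : ℕ → ℝ := fun k => ∑ j ∈ Finset.range (k+1), a (Nat.nth N j) with hTdef
  have hSpc : ∀ (k mk : ℕ), ∃ j, mk < j ∧ (k+1 : ℝ) ≤ Sp j + T k := by
    intro k mk
    obtain ⟨j0, hj0⟩ := (hSp.eventually_ge_atTop ((k+1 : ℝ) - T k)).exists_forall_of_atTop
    refine ⟨max j0 (mk+1), lt_of_lt_of_le (Nat.lt_succ_self mk) (le_max_right _ _), ?_⟩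
    have := hj0 (max j0 (mk+1)) (le_max_left _ _)
    linarith
  choose F hF1 hF2 using hSpc
  set M : ℕ → ℕ := rstSeqRec F with hMdef
  have hMsucc : ∀ k, M (k+1) = F k (M k) := fun k => rfl
  have hMlt : ∀ k, M k < M (k+1) := fun k => by rw [hMsucc]; exact hF1 k (M k)
  have hMkey : ∀ k : ℕ, ((k : ℝ) + 1) ≤ Sp (M (k+1)) + T k := fun k => by
    rw [hMsucc]; exact hF2 k (M k)
  set b : ℕ → ℕ := fun k => M (k+1) + k with hbdef
  have hbmono : StrictMono b := by
    apply strictMono_nat_of_lt_succ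
    intro k
    have h1 : M (k+1) < M (k+1+1) := hMlt (k+1)
    show M (k+1) + k < M (k+1+1) + (k+1)
    omega
  set Dp : ℕ → Prop := fun i => ∃ k, b k = i with hDpdef
  have hDpinf : (setOf Dp).Infinite := by
    exact Set.infinite_of_injective_forall_mem (f := b) (s := setOf Dp)
      hbmono.injective (fun k => ⟨k, rfl⟩)
  have hnotDp : ∀ k, ¬ Dp (b k + 1) := by
    rintro k ⟨j, hj⟩
    rcases le_or_gt j k with h | h
    · have := hbmono.monotone h; omega
    · have h2 : b (k+1) ≤ b j := hbmono.monotone h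
      have h3 : M (k+1) < M (k+1+1) := hMlt (k+1)
      have hj' : b j = M (k+1) + k + 1 := hj
      have h2' : M (k+1+1) + (k+1) ≤ b j := h2
      omega
  have hDpcinf : (setOf fun i => ¬ Dp i).Infinite := by
    exact Set.infinite_of_injective_forall_mem (f := fun k => b k + 1)
      (fun i j h => hbmono.injective (by have h' : b i + 1 = b j + 1 := h; omega)) (fun k => hnotDp k)
  -- Nat.nth of Dp is b
  have hnth_b : ∀ k, Nat.nth Dp k = b k := by
    intro k
    induction k using Nat.strong_induction_on with
    | _ k ih =>
      rw [Nat.nth_eq_sInf]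
      refine IsLeast.csInf_eq ⟨⟨⟨k, rfl⟩, fun j hj => ?_⟩, ?_⟩
      · rw [ih j hj]; exact hbmono hj
      · rintro x ⟨⟨i, rfl⟩, hx⟩
        by_contra hlt
        push_neg at hlt
        have hik : i < k := hbmono.lt_iff_lt.mp hlt
        have := hx i hik
        rw [ih i hik] at this
        exact lt_irrefl _ this
  have hcount_b : ∀ k, Nat.count Dp (b k) = k := fun k => by
    rw [← hnth_b]; exact Nat.count_nth_of_infinite hDpinf k
  have hsplit : ∀ n, Nat.count Dp n + Nat.count (fun i => ¬ Dp i) n = n := by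
    intro n
    induction n with
    | zero => simp
    | succ n ih =>
      rw [Nat.count_succ, Nat.count_succ]
      by_cases h : Dp n
      · rw [if_pos h, if_neg (not_not_intro h)]; omega
      · rw [if_neg h, if_pos h]; omega
  -- the permutation
  set g : ℕ → ℕ := fun i =>
    if Dp i then Nat.nth N (Nat.count Dp i) else Nat.nth P (Nat.count (fun i => ¬ Dp i) i)
    with hgdef
  have hgb : ∀ k, g (b k) = Nat.nth N k := by
    intro k
    simp only [hgdef, if_pos (show Dp (b k) from ⟨k, rfl⟩), hcount_b]
  have hginj : Function.Injective g := by
    intro i j hij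
    by_cases hi : Dp i <;> by_cases hj : Dp j <;>
      simp only [hgdef, if_pos, if_neg, hi, hj, if_true, if_false] at hij
    · exact Nat.count_injective hi hj (Nat.nth_injective hNinf hij)
    · have h1 : N (Nat.nth N (Nat.count Dp i)) := Nat.nth_mem_of_infinite hNinf _
      have h2 : P (Nat.nth P (Nat.count (fun i => ¬ Dp i) j)) := Nat.nth_mem_of_infinite hPinf _
      rw [hij] at h1
      exact absurd h2 (not_le.mpr h1)
    · have h1 : N (Nat.nth N (Nat.count Dp j)) := Nat.nth_mem_of_infinite hNinf _
      have h2 : P (Nat.nth P (Nat.count (fun i => ¬ Dp i) i)) := Nat.nth_mem_of_infinite hPinf _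
      rw [← hij] at h1
      exact absurd h2 (not_le.mpr h1)
    · exact Nat.count_injective hi hj (Nat.nth_injective hPinf hij)
  have hgsurj : Function.Surjective g := by
    intro x
    by_cases hx : a x < 0
    · refine ⟨b (Nat.count N x), ?_⟩
      rw [hgb, Nat.nth_count hx]
    · refine ⟨Nat.nth (fun i => ¬ Dp i) (Nat.count P x), ?_⟩
      have h1 : ¬ Dp (Nat.nth (fun i => ¬ Dp i) (Nat.count P x)) :=
        Nat.nth_mem_of_infinite hDpcinf _
      simp only [hgdef, if_neg h1, Nat.count_nth_of_infinite hDpcinf]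
      exact Nat.nth_count (not_lt.mp hx)
  -- partial sums of the rearranged series
  have hsum : ∀ n, ∑ i ∈ Finset.range n, a (g i)
      = Sp (Nat.count (fun i => ¬ Dp i) n)
        + ∑ j ∈ Finset.range (Nat.count Dp n), a (Nat.nth N j) := by
    intro n
    induction n with
    | zero => simp [hSpdef]
    | succ n ih =>
      rw [Finset.sum_range_succ, ih, Nat.count_succ Dp, Nat.count_succ (fun i => ¬ Dp i)]
      by_cases h : Dp n
      · rw [if_pos h, if_neg (not_not_intro h), add_zero,
          Finset.sum_range_succ (f := fun j => a (Nat.nth N j))]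
        have : g n = Nat.nth N (Nat.count Dp n) := by simp only [hgdef, if_pos h]
        rw [this]; ring
      · rw [if_neg h, if_pos h, add_zero]
        have hstep : Sp (Nat.count (fun i => ¬ Dp i) n + 1)
            = Sp (Nat.count (fun i => ¬ Dp i) n)
              + a (Nat.nth P (Nat.count (fun i => ¬ Dp i) n)) := by
          simp only [hSpdef]
          rw [Finset.sum_range_succ]
        have hgn : g n = Nat.nth P (Nat.count (fun i => ¬ Dp i) n) := by
          simp only [hgdef, if_neg h]
        rw [hstep, hgn]; ring
  -- lower bound on partial sums
  have hbound : ∀ n, 1 ≤ Nat.count Dp n →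
      (Nat.count Dp n : ℝ) ≤ ∑ i ∈ Finset.range n, a (g i) := by
    intro n hc
    rw [hsum n]
    set c := Nat.count Dp n with hcdef
    have hblt : b (c-1) < n := by
      rw [← hnth_b]
      exact Nat.nth_lt_of_lt_count (by omega)
    have hbc : b (c-1) = M c + (c-1) := by
      show M (c-1+1) + (c-1) = M c + (c-1)
      congr 2
      omega
    have hge : M c ≤ Nat.count (fun i => ¬ Dp i) n := by
      have h1 := hsplit n
      omega
    have hkey := hMkey (c-1)
    have hc1 : c - 1 + 1 = c := by omega
    rw [hc1] at hkey
    have hcast : ((c - 1 : ℕ) : ℝ) + 1 = (c : ℝ) := by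
      rw [Nat.cast_sub (by omega : 1 ≤ c)]
      ring
    calc (c : ℝ) ≤ Sp (M c) + T (c-1) := by
          rw [← hcast]; exact_mod_cast hkey
      _ ≤ Sp (Nat.count (fun i => ¬ Dp i) n) + T (c-1) := by
          exact add_le_add_left (hSpmono hge) _
      _ = Sp (Nat.count (fun i => ¬ Dp i) n) + ∑ j ∈ Finset.range c, a (Nat.nth N j) := by
          have hT : T (c-1) = ∑ j ∈ Finset.range c, a (Nat.nth N j) := by
            simp only [hTdef]
            rw [hc1]
          rw [hT]
  -- conclude
  refine ⟨Equiv.ofBijective g ⟨hginj, hgsurj⟩, ?_⟩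
  have happ : ∀ i, (Equiv.ofBijective g ⟨hginj, hgsurj⟩) i = g i := fun i => rfl
  simp only [happ]
  have hcountTop : Tendsto (fun n => Nat.count Dp n) atTop atTop := by
    refine tendsto_atTop_of_monotone_of_subseq (Nat.count_monotone Dp) (φ := b) (l := atTop) ?_
    have heq : Nat.count Dp ∘ b = id := funext fun k => hcount_b k
    rw [heq]
    exact tendsto_id
  refine tendsto_atTop_mono' atTop ?_
    (tendsto_natCast_atTop_atTop.comp hcountTop)
  filter_upwards [eventually_ge_atTop (b 0 + 1)] with n hn
  refine hbound n ?_
  have h1 : Nat.count Dp (b 0 + 1) = 1 := by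
    rw [Nat.count_succ, hcount_b, if_pos ⟨0, rfl⟩]
  have := Nat.count_monotone Dp hn
  omega
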